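/- Let η^tv(·;τ): ℝ^N → ℝ^N be the total variation denoiser, η^tv(y;τ) = argmin_{x∈ℝ^N} { ½‖y − x‖₂² + τ‖x‖_TV } where ‖x‖_TV = Σ_{i=1}^{N−1}|x_{i+1} − x_i| (the minimizer exists and is unique by strict convexity). Define R_N(μ;τ) = E ‖η^tv(μ + Z;τ) − μ‖₂² with Z ∼ N(0, I_N). Then for every μ ∈ ℝ^N and every τ ≥ 0, the function t ↦ R_N(tμ;τ) is monotone nondecreasing on [0,∞). -/

import Mathlib

open MeasureTheory ProbabilityTheory ENNReal

noncomputable section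

/-- The standard Gaussian measure `N(0, I_N)` on `ℝ^N`. -/
def stdGaussian (N : ℕ) : Measure (Fin N → ℝ) :=
  Measure.pi fun _ => gaussianReal 0 1

/-- Extension of `x : ℝ^N` to `ℕ` by zero. -/
def extz (N : ℕ) (x : Fin N → ℝ) : ℕ → ℝ := fun i => if h : i < N then x ⟨i, h⟩ else 0

/-- The discrete total variation `‖x‖_TV = Σ_{i=1}^{N−1} |x_{i+1} − x_i|`. -/
def tvNorm (N : ℕ) (x : Fin N → ℝ) : ℝ :=
  ∑ i ∈ Finset.range (N - 1), |extz N x (i + 1) - extz N x i|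

namespace TVAux

variable {N : ℕ}

lemma real_le_of_forall_pos {a b : ℝ} (h : ∀ ε : ℝ, 0 < ε → a ≤ b + ε) : a ≤ b := by
  by_contra hc
  push_neg at hc
  have := h ((a - b) / 2) (by linarith)
  linarith

lemma extz_combo (a b : ℝ) (u v : Fin N → ℝ) (j : ℕ) :
    extz N (fun i => a * u i + b * v i) j = a * extz N u j + b * extz N v j := by
  unfold extz
  split_ifs <;> simp

lemma tv_combo (a b : ℝ) (ha : 0 ≤ a) (hb : 0 ≤ b) (u v : Fin N → ℝ) :
    tvNorm N (fun i => a * u i + b * v i) ≤ a * tvNorm N u + b * tvNorm N v := by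
  unfold tvNorm
  rw [Finset.mul_sum, Finset.mul_sum, ← Finset.sum_add_distrib]
  refine Finset.sum_le_sum fun i _ => ?_
  rw [extz_combo, extz_combo]
  have h1 : a * extz N u (i+1) + b * extz N v (i+1) - (a * extz N u i + b * extz N v i)
      = a * (extz N u (i+1) - extz N u i) + b * (extz N v (i+1) - extz N v i) := by ring
  rw [h1]
  calc |a * (extz N u (i+1) - extz N u i) + b * (extz N v (i+1) - extz N v i)|
      ≤ |a * (extz N u (i+1) - extz N u i)| + |b * (extz N v (i+1) - extz N v i)| :=
        abs_add_le _ _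
    _ = a * |extz N u (i+1) - extz N u i| + b * |extz N v (i+1) - extz N v i| := by
        rw [abs_mul, abs_mul, abs_of_nonneg ha, abs_of_nonneg hb]

lemma tv_smul (c : ℝ) (x : Fin N → ℝ) :
    tvNorm N (fun i => c * x i) = |c| * tvNorm N x := by
  unfold tvNorm
  rw [Finset.mul_sum]
  refine Finset.sum_congr rfl fun i _ => ?_
  have h0 : extz N (fun i => c * x i) (i+1) = c * extz N x (i+1) := by
    unfold extz; split_ifs <;> simp
  have h1 : extz N (fun i => c * x i) i = c * extz N x i := by
    unfold extz; split_ifs <;> simp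
  rw [h0, h1, ← abs_mul]
  ring_nf

lemma tv_zero : tvNorm N (fun _ => (0:ℝ)) = 0 := by
  unfold tvNorm
  refine Finset.sum_eq_zero fun i _ => ?_
  have h0 : ∀ j, extz N (fun _ => (0:ℝ)) j = 0 := by
    intro j; unfold extz; split_ifs <;> simp
  rw [h0, h0]; simp

section Eta

variable (η : ℝ → (Fin N → ℝ) → (Fin N → ℝ)) (τ : ℝ)

variable {η τ}

/-- Subgradient inequality: `y - η y ∈ ∂(τ‖·‖_TV)(η y)`. -/
lemma subgrad
    (hτ : 0 ≤ τ)
    (hη : ∀ y x : Fin N → ℝ,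
      (1 / 2) * (∑ i, (y i - η τ y i) ^ 2) + τ * tvNorm N (η τ y) ≤
      (1 / 2) * (∑ i, (y i - x i) ^ 2) + τ * tvNorm N x)
    (y x : Fin N → ℝ) :
    τ * tvNorm N (η τ y) + ∑ i, (y i - η τ y i) * (x i - η τ y i) ≤ τ * tvNorm N x := by
  set e := η τ y with he
  set B := ∑ i, (x i - e i) ^ 2 with hB
  have hBnn : 0 ≤ B := Finset.sum_nonneg fun i _ => sq_nonneg _
  refine real_le_of_forall_pos fun ε hε => ?_
  set lam : ℝ := min 1 (ε / (B + 1)) with hlam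
  have hlam0 : 0 < lam := lt_min one_pos (div_pos hε (by linarith))
  have hlam1 : lam ≤ 1 := min_le_left _ _
  have key := hη y (fun i => e i + lam * (x i - e i))
  have hfun : (fun i => e i + lam * (x i - e i)) = (fun i => (1 - lam) * e i + lam * x i) := by
    funext i; ring
  have hconv : tvNorm N (fun i => e i + lam * (x i - e i)) ≤
      (1 - lam) * tvNorm N e + lam * tvNorm N x := by
    rw [hfun]
    exact tv_combo (1 - lam) lam (by linarith) (le_of_lt hlam0) e x
  have hexp : ∑ i, (y i - (e i + lam * (x i - e i))) ^ 2
      = ∑ i, (y i - e i) ^ 2 - 2 * lam * (∑ i, (y i - e i) * (x i - e i)) + lam ^ 2 * B := by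
    rw [hB, Finset.mul_sum, Finset.mul_sum, ← Finset.sum_sub_distrib, ← Finset.sum_add_distrib]
    exact Finset.sum_congr rfl fun i _ => by ring
  rw [hexp] at key
  have hmul : τ * tvNorm N (fun i => e i + lam * (x i - e i)) ≤
      τ * ((1 - lam) * tvNorm N e + lam * tvNorm N x) :=
    mul_le_mul_of_nonneg_left hconv hτ
  -- from key and hmul: lam * (τ tv e + ip - τ tv x) ≤ lam^2/2 * B
  have step : lam * (τ * tvNorm N e + (∑ i, (y i - e i) * (x i - e i)) - τ * tvNorm N x)
      ≤ lam ^ 2 / 2 * B := by nlinarith [key, hmul]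
  have step' : lam * (τ * tvNorm N e + (∑ i, (y i - e i) * (x i - e i)) - τ * tvNorm N x)
      ≤ lam * (lam / 2 * B) := by
    calc lam * (τ * tvNorm N e + (∑ i, (y i - e i) * (x i - e i)) - τ * tvNorm N x)
        ≤ lam ^ 2 / 2 * B := step
      _ = lam * (lam / 2 * B) := by ring
  have hdiv : τ * tvNorm N e + (∑ i, (y i - e i) * (x i - e i)) - τ * tvNorm N x
      ≤ lam / 2 * B := le_of_mul_le_mul_left step' hlam0
  have hlB : lam / 2 * B ≤ ε := by
    have h2 : lam ≤ ε / (B + 1) := min_le_right _ _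
    have h3 : lam * B ≤ ε / (B + 1) * B := mul_le_mul_of_nonneg_right h2 hBnn
    have h4 : ε / (B + 1) * B ≤ ε := by
      rw [div_mul_eq_mul_div, div_le_iff₀ (by linarith : (0:ℝ) < B + 1)]
      nlinarith
    linarith
  linarith

/-- Homogeneity identity: `τ‖η y‖_TV = ⟨y − η y, η y⟩`. -/
lemma homog_id
    (hτ : 0 ≤ τ)
    (hη : ∀ y x : Fin N → ℝ,
      (1 / 2) * (∑ i, (y i - η τ y i) ^ 2) + τ * tvNorm N (η τ y) ≤
      (1 / 2) * (∑ i, (y i - x i) ^ 2) + τ * tvNorm N x)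
    (y : Fin N → ℝ) :
    τ * tvNorm N (η τ y) = ∑ i, (y i - η τ y i) * η τ y i := by
  set e := η τ y with he
  have h0 := subgrad hτ hη y (fun _ => 0)
  rw [tv_zero] at h0
  have h0' : ∑ i, (y i - e i) * ((fun _ => (0:ℝ)) i - e i) = -∑ i, (y i - e i) * e i := by
    rw [← Finset.sum_neg_distrib]
    exact Finset.sum_congr rfl fun i _ => by show (y i - e i) * (0 - e i) = -((y i - e i) * e i); ring
  rw [h0'] at h0
  have h2 := subgrad hτ hη y (fun i => 2 * e i)
  have h2tv : tvNorm N (fun i => 2 * e i) = 2 * tvNorm N e := by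
    rw [tv_smul]; norm_num
  rw [h2tv] at h2
  have h2' : ∑ i, (y i - e i) * ((fun i => 2 * e i) i - e i) = ∑ i, (y i - e i) * e i := by
    exact Finset.sum_congr rfl fun i _ => by show (y i - e i) * (2 * e i - e i) = (y i - e i) * e i; ring
  rw [h2'] at h2
  have hτtv := h0
  linarith

/-- Convexity of `y ↦ ½‖η y‖²` with gradient `η y`. -/
lemma convex_psi
    (hτ : 0 ≤ τ)
    (hη : ∀ y x : Fin N → ℝ,
      (1 / 2) * (∑ i, (y i - η τ y i) ^ 2) + τ * tvNorm N (η τ y) ≤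
      (1 / 2) * (∑ i, (y i - x i) ^ 2) + τ * tvNorm N x)
    (y y' : Fin N → ℝ) :
    ∑ i, (η τ y i) ^ 2 + 2 * ∑ i, η τ y i * (y' i - y i) ≤ ∑ i, (η τ y' i) ^ 2 := by
  have h := subgrad hτ hη y' (η τ y)
  rw [homog_id hτ hη y'] at h
  have hl : ∑ i, (y' i - η τ y' i) * η τ y' i
        + ∑ i, (y' i - η τ y' i) * (η τ y i - η τ y' i)
      = ∑ i, (y' i - η τ y' i) * η τ y i := by
    rw [← Finset.sum_add_distrib]
    exact Finset.sum_congr rfl fun i _ => by ring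
  rw [homog_id hτ hη y] at h
  -- h : ∑ (y'-e')e' + ∑ (y'-e')(e-e') ≤ ∑ (y-e)e
  have hdag : ∑ i, (y' i - η τ y' i) * η τ y i ≤ ∑ i, (y i - η τ y i) * η τ y i := by
    rw [← hl]; exact h
  -- rearrange : ∑ e (y'-y) ≤ ∑ e' e - ∑ e²
  have hre : ∑ i, η τ y i * (y' i - y i)
      ≤ ∑ i, η τ y' i * η τ y i - ∑ i, (η τ y i) ^ 2 := by
    have h1 : ∑ i, (y' i - η τ y' i) * η τ y i
        = ∑ i, (η τ y i * (y' i - y i) + ((y i - η τ y i) * η τ y i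
            - (η τ y' i * η τ y i - (η τ y i) ^ 2))) := by
      exact Finset.sum_congr rfl fun i _ => by ring
    rw [h1, Finset.sum_add_distrib, Finset.sum_sub_distrib, Finset.sum_sub_distrib] at hdag
    linarith
  have hEE : (0:ℝ) ≤ ∑ i, (η τ y' i - η τ y i) ^ 2 :=
    Finset.sum_nonneg fun i _ => sq_nonneg _
  have hsplit : ∑ i, (η τ y' i - η τ y i) ^ 2
      = ∑ i, (η τ y' i) ^ 2 - 2 * ∑ i, η τ y' i * η τ y i + ∑ i, (η τ y i) ^ 2 := by
    rw [Finset.mul_sum, ← Finset.sum_sub_distrib, ← Finset.sum_add_distrib]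
    exact Finset.sum_congr rfl fun i _ => by ring
  linarith

/-- Firm nonexpansiveness of `η`. -/
lemma firm
    (hτ : 0 ≤ τ)
    (hη : ∀ y x : Fin N → ℝ,
      (1 / 2) * (∑ i, (y i - η τ y i) ^ 2) + τ * tvNorm N (η τ y) ≤
      (1 / 2) * (∑ i, (y i - x i) ^ 2) + τ * tvNorm N x)
    (y y' : Fin N → ℝ) :
    ∑ i, (η τ y' i - η τ y i) ^ 2 ≤ ∑ i, (y' i - y i) * (η τ y' i - η τ y i) := by
  have h1 := subgrad hτ hη y (η τ y')
  have h2 := subgrad hτ hη y' (η τ y)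
  have hc : ∑ i, (y i - η τ y i) * (η τ y' i - η τ y i)
        + ∑ i, (y' i - η τ y' i) * (η τ y i - η τ y' i)
      = ∑ i, ((η τ y' i - η τ y i) ^ 2 - (y' i - y i) * (η τ y' i - η τ y i)) := by
    rw [← Finset.sum_add_distrib]
    exact Finset.sum_congr rfl fun i _ => by ring
  have hc2 : ∑ i, ((η τ y' i - η τ y i) ^ 2 - (y' i - y i) * (η τ y' i - η τ y i))
      = ∑ i, (η τ y' i - η τ y i) ^ 2 - ∑ i, (y' i - y i) * (η τ y' i - η τ y i) :=
    Finset.sum_sub_distrib _ _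
  linarith [h1, h2, hc, hc2]

end Eta

end TVAux

set_option maxHeartbeats 1000000 in
/-- **Monotonicity of the TV-denoising risk along rays.**
Let `η τ` be the total variation denoiser, i.e. for every `y`, `η τ y`
minimizes `½‖y − x‖₂² + τ‖x‖_TV` over `x ∈ ℝ^N`.  Then for every `μ ∈ ℝ^N`
and `τ ≥ 0`, the risk `R_N(tμ;τ) = E ‖η(tμ + Z;τ) − tμ‖₂²` is monotone
nondecreasing in `t ∈ [0,∞)`. -/
theorem tv_risk_monotone
    (N : ℕ) (η : ℝ → (Fin N → ℝ) → (Fin N → ℝ))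
    (hmeas : ∀ τ : ℝ, Measurable (η τ))
    (hη : ∀ τ : ℝ, 0 ≤ τ → ∀ y x : Fin N → ℝ,
      (1 / 2) * (∑ i, (y i - η τ y i) ^ 2) + τ * tvNorm N (η τ y) ≤
      (1 / 2) * (∑ i, (y i - x i) ^ 2) + τ * tvNorm N x)
    (μ : Fin N → ℝ) (τ : ℝ) (hτ : 0 ≤ τ) :
    ∀ s t : ℝ, 0 ≤ s → s ≤ t →
      (∫⁻ z, ENNReal.ofReal (∑ i, (η τ (s • μ + z) i - (s • μ) i) ^ 2)
          ∂(stdGaussian N)) ≤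
      (∫⁻ z, ENNReal.ofReal (∑ i, (η τ (t • μ + z) i - (t • μ) i) ^ 2)
          ∂(stdGaussian N)) := by
  intro s t hs hst
  refine lintegral_mono fun z => ENNReal.ofReal_le_ofReal ?_
  simp only [Pi.add_apply, Pi.smul_apply, smul_eq_mul]
  have hη' := hη τ hτ
  set r : ℝ → ℝ := fun u => ∑ i, (η τ (u • μ + z) i - u * μ i) ^ 2 with hr
  show r s ≤ r t
  set c : ℝ := ∑ i, (μ i) ^ 2 with hcdef
  have hc : 0 ≤ c := Finset.sum_nonneg fun i _ => sq_nonneg _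
  -- one-step estimate
  have step : ∀ a b : ℝ, 0 ≤ a → a ≤ b → r a ≤ r b + c * (b - a) ^ 2 := by
    intro a b ha hab
    have hb : 0 ≤ b := le_trans ha hab
    set y : Fin N → ℝ := a • μ + z with hy
    set y' : Fin N → ℝ := b • μ + z with hy'
    have hyi : ∀ i, y i = a * μ i + z i := fun i => by simp [hy]
    have hyi' : ∀ i, y' i = b * μ i + z i := fun i => by simp [hy']
    set P : ℝ := ∑ i, (η τ y' i) ^ 2 with hP
    set Q : ℝ := ∑ i, (η τ y i) ^ 2 with hQ
    set d : ℝ := ∑ i, μ i * η τ y i with hd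
    set d' : ℝ := ∑ i, μ i * η τ y' i with hd'
    have hrb : r b = P - 2 * b * d' + b ^ 2 * c := by
      rw [hr, hP, hd', hcdef]
      simp only
      rw [Finset.mul_sum, Finset.mul_sum, ← Finset.sum_sub_distrib, ← Finset.sum_add_distrib]
      exact Finset.sum_congr rfl fun i _ => by ring
    have hra : r a = Q - 2 * a * d + a ^ 2 * c := by
      rw [hr, hQ, hd, hcdef]
      simp only
      rw [Finset.mul_sum, Finset.mul_sum, ← Finset.sum_sub_distrib, ← Finset.sum_add_distrib]
      exact Finset.sum_congr rfl fun i _ => by ring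
    -- convexity: Q + 2 (b-a) d ≤ P
    have hconv0 := TVAux.convex_psi hτ hη' y y'
    have hlin : ∑ i, η τ y i * (y' i - y i) = (b - a) * d := by
      rw [hd, Finset.mul_sum]
      refine Finset.sum_congr rfl fun i _ => ?_
      rw [hyi, hyi']; ring
    rw [hlin] at hconv0
    -- firm nonexpansiveness and Cauchy-Schwarz give : d' - d ≤ (b - a) * c
    have hfirm := TVAux.firm hτ hη' y y'
    have hA : ∑ i, (y' i - y i) * (η τ y' i - η τ y i) = (b - a) * (d' - d) := by
      rw [hd, hd', ← Finset.sum_sub_distrib, Finset.mul_sum]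
      refine Finset.sum_congr rfl fun i _ => ?_
      rw [hyi, hyi']; ring
    rw [hA] at hfirm
    have hCS : (d' - d) ^ 2 ≤ c * ∑ i, (η τ y' i - η τ y i) ^ 2 := by
      have h0 : d' - d = ∑ i, μ i * (η τ y' i - η τ y i) := by
        rw [hd, hd', ← Finset.sum_sub_distrib]
        exact Finset.sum_congr rfl fun i _ => by ring
      rw [h0, hcdef]
      exact Finset.sum_mul_sq_le_sq_mul_sq _ _ _
    have hB2 : (0:ℝ) ≤ ∑ i, (η τ y' i - η τ y i) ^ 2 :=
      Finset.sum_nonneg fun i _ => sq_nonneg _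
    have hdd : d' - d ≤ (b - a) * c := by
      rcases le_or_gt (d' - d) 0 with hle | hgt
      · nlinarith
      · nlinarith [hfirm, hCS, hB2, mul_pos hgt hgt]
    have hmul : 2 * b * (d' - d) ≤ 2 * b * ((b - a) * c) :=
      mul_le_mul_of_nonneg_left hdd (by linarith)
    nlinarith [hconv0, hrb, hra, hmul]
  -- iterate the one-step estimate
  refine TVAux.real_le_of_forall_pos fun ε hε => ?_
  obtain ⟨n, hn⟩ := exists_nat_gt (c * (t - s) ^ 2 / ε)
  have hn0 : 0 < (n:ℝ) := by
    have h0 : (0:ℝ) ≤ c * (t - s) ^ 2 / ε := div_nonneg (mul_nonneg hc (sq_nonneg _)) hε.le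
    linarith
  set δ : ℝ := (t - s) / n with hδdef
  have hδ : 0 ≤ δ := div_nonneg (by linarith) hn0.le
  have hind : ∀ k : ℕ, r s ≤ r (s + k * δ) + k * (c * δ ^ 2) := by
    intro k
    induction k with
    | zero => simp
    | succ k ih =>
      have h1 : 0 ≤ s + k * δ :=
        add_nonneg hs (mul_nonneg (Nat.cast_nonneg _) hδ)
      have hk1 : ((k:ℝ) + 1) * δ = (k:ℝ) * δ + δ := by ring
      have h2 : s + (k:ℝ) * δ ≤ s + ((k:ℝ) + 1) * δ := by linarith
      have h3 := step (s + k * δ) (s + ((k:ℝ) + 1) * δ) h1 h2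
      have h4 : (s + ((k:ℝ) + 1) * δ - (s + (k:ℝ) * δ)) = δ := by ring
      rw [h4] at h3
      have h5 : ((k + 1 : ℕ) : ℝ) = (k:ℝ) + 1 := by push_cast; ring
      rw [h5]
      have hsum : ((k:ℝ) + 1) * (c * δ ^ 2) = (k:ℝ) * (c * δ ^ 2) + c * δ ^ 2 := by ring
      linarith [ih, h3]
  have hteq : s + (n:ℝ) * δ = t := by
    rw [hδdef]; field_simp; ring
  have hfin := hind n
  rw [hteq] at hfin
  have hbound : (n:ℝ) * (c * δ ^ 2) ≤ ε := by
    have h1 : (n:ℝ) * (c * δ ^ 2) = c * (t - s) ^ 2 / n := by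
      rw [hδdef]; field_simp
    rw [h1]
    rw [div_le_iff₀ hn0]
    have := (div_lt_iff₀ hε).mp hn
    nlinarith
  linarith
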